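/- On the cycle graph, in the Voronoi game with disjoint facilities, when a player performs a best response move to an unoccupied vertex, the multiset of gaps between consecutive occupied facilities strictly decreases in the dominance order; therefore the best response dynamic starting from a profile with distinct facilities converges to a Nash equilibrium in finitely many steps. -/

import Mathlib

/-- Fueled version of the dominance order on multisets of naturals. -/
def DomAux : ℕ → Multiset ℕ → Multiset ℕ → Prop
  | 0, _, _ => False
  | n + 1, A, B =>
      A.card < B.card ∨
        (A.card = B.card ∧ A ≠ 0 ∧
          (B.sup < A.sup ∨
            (A.sup = B.sup ∧ DomAux n (A.erase A.sup) (B.erase B.sup))))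

/-- The dominance order: `Dom A B` means `A ≻ B`, i.e. `|A| < |B|`, or the sizes agree
and `max A > max B`, or the sizes and maxima agree and the multisets obtained by
removing one copy of the maxima satisfy the relation recursively. -/
def Dom (A B : Multiset ℕ) : Prop := DomAux (A.card + 1) A B

/-- A best-response move in the Voronoi game with disjoint facilities on the cycle:
the moving player (with adjacent gaps `di`, `di1`) relocates to an unoccupied vertex
splitting some gap `dj` into `d' + d''`, strictly increasing his payoff
(`(di + di1)/2 < dj/2`). -/
def CycleBestResponseStep (D' D : Multiset ℕ) : Prop :=
  ∃ di di1 dj d' d'' : ℕ,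
    ({di, di1, dj} : Multiset ℕ) ≤ D ∧ 1 ≤ d' ∧ 1 ≤ d'' ∧ d' + d'' = dj ∧
    di + di1 < dj ∧ D' = D - {di, di1, dj} + {di + di1, d', d''}

lemma Multiset.sup_mem' (A : Multiset ℕ) (h : A ≠ 0) : A.sup ∈ A := by
  induction A using Multiset.induction_on with
  | empty => exact absurd rfl h
  | cons a t ih =>
    rw [Multiset.sup_cons]
    rcases le_total a t.sup with hle | hle
    · by_cases ht : t = 0
      · subst ht; simp_all
      · rw [sup_eq_right.mpr hle]
        exact Multiset.mem_cons_of_mem (ih ht)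
    · rw [sup_eq_left.mpr hle]; exact Multiset.mem_cons_self _ _

lemma key : ∀ (fuel : ℕ) (C X Y : Multiset ℕ), C.card < fuel → X ≠ 0 →
    X.card = Y.card → (∀ y ∈ Y, y < X.sup) → DomAux fuel (C + X) (C + Y) := by
  intro fuel
  induction fuel with
  | zero => intro C X Y h; omega
  | succ m ih =>
    intro C X Y hC hX hcard hY
    have hYne : Y ≠ 0 := by
      rintro rfl
      exact hX (Multiset.card_eq_zero.mp (by simpa using hcard))
    have hYsup : Y.sup < X.sup := hY _ (Multiset.sup_mem' Y hYne)
    have hle : (C + Y).sup ≤ (C + X).sup := by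
      simp only [Multiset.sup_add]
      exact sup_le_sup_left hYsup.le _
    have hAne : C + X ≠ 0 := by
      intro h
      apply hX
      rw [← Multiset.card_eq_zero]
      have := congrArg Multiset.card h
      simp only [Multiset.card_add, Multiset.card_zero] at this
      omega
    refine Or.inr ⟨by simp [hcard], hAne, ?_⟩
    rcases lt_or_eq_of_le hle with hlt | heq
    · exact Or.inl hlt
    · refine Or.inr ⟨heq.symm, ?_⟩
      have hCX : X.sup ≤ C.sup := by
        by_contra hc
        push_neg at hc
        have hstrict : (C + Y).sup < (C + X).sup := by
          rw [Multiset.sup_add, Multiset.sup_add]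
          exact lt_of_lt_of_le (max_lt hc hYsup) le_sup_right
        exact absurd heq (ne_of_lt hstrict)
      have htC : (C + X).sup = C.sup := by
        rw [Multiset.sup_add]; exact sup_eq_left.mpr hCX
      have hCne : C ≠ 0 := by
        rintro rfl
        have : X.sup ≤ 0 := by simpa using hCX
        omega
      have htmem : (C + X).sup ∈ C := htC ▸ Multiset.sup_mem' C hCne
      rw [Multiset.erase_add_left_pos X htmem,
        show (C + Y).sup = (C + X).sup from heq,
        Multiset.erase_add_left_pos Y htmem]
      refine ih _ _ _ ?_ hX hcard hY
      have h0 : 0 < C.card := Multiset.card_pos.mpr hCne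
      rw [Multiset.card_erase_of_mem htmem, Nat.pred_eq_sub_one]
      omega

lemma step_dom (D D' : Multiset ℕ) (h : CycleBestResponseStep D' D) : Dom D D' := by
  obtain ⟨di, di1, dj, d', d'', hle, h1, h2, hsum, hlt, hD'⟩ := h
  set X : Multiset ℕ := {di, di1, dj} with hXdef
  set Y : Multiset ℕ := {di + di1, d', d''} with hYdef
  set C : Multiset ℕ := D - X with hCdef
  have hD : D = C + X := by
    rw [hCdef]; exact (tsub_add_cancel_of_le hle).symm
  have hdj : dj ≤ X.sup := Multiset.le_sup (by simp [hXdef])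
  have hY : ∀ y ∈ Y, y < X.sup := by
    intro y hy
    rw [hYdef] at hy
    simp only [Multiset.insert_eq_cons, Multiset.mem_cons, Multiset.mem_singleton] at hy
    rcases hy with rfl | rfl | rfl <;> omega
  have hcard : X.card = Y.card := by simp [hXdef, hYdef]
  have hkey : DomAux ((C + X).card + 1) (C + X) (C + Y) :=
    key _ C X Y (by simp only [Multiset.card_add]; omega)
      (by rw [hXdef]; exact Multiset.cons_ne_zero) hcard hY
  rw [Dom, hD, hD']
  exact hkey

theorem stmt6 (n : ℕ) :
    (∀ D D' : Multiset ℕ, (∀ x ∈ D, 0 < x) → CycleBestResponseStep D' D → Dom D D') ∧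
    Set.WellFoundedOn
      {D : Multiset ℕ | D.sum = n ∧ ∀ x ∈ D, 0 < x}
      CycleBestResponseStep := by
  constructor
  · intro D D' _ h; exact step_dom D D' h
  · have hmeas : ∀ D D' : Multiset ℕ, CycleBestResponseStep D' D →
        (D'.map (fun x => 4 ^ x)).sum < (D.map (fun x => 4 ^ x)).sum := by
      intro D D' h
      obtain ⟨di, di1, dj, d', d'', hle, h1, h2, hsum, hlt, hD'⟩ := h
      set X : Multiset ℕ := {di, di1, dj} with hXdef
      set C : Multiset ℕ := D - X with hCdef
      have hD : D = C + X := by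
        rw [hCdef]; exact (tsub_add_cancel_of_le hle).symm
      rw [hD', hD]
      simp only [Multiset.map_add, Multiset.sum_add]
      have e1 : ((({di + di1, d', d''} : Multiset ℕ)).map (fun x => 4 ^ x)).sum
          = 4 ^ (di + di1) + 4 ^ d' + 4 ^ d'' := by
        simp [add_assoc]
      have e2 : ((X).map (fun x => 4 ^ x)).sum = 4 ^ di + 4 ^ di1 + 4 ^ dj := by
        simp [hXdef, add_assoc]
      rw [e1, e2]
      have key4 : 4 ^ (di + di1) + 4 ^ d' + 4 ^ d'' < 4 ^ di + 4 ^ di1 + 4 ^ dj := by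
        have hd1 : di + di1 ≤ dj - 1 := by omega
        have hd2 : d' ≤ dj - 1 := by omega
        have hd3 : d'' ≤ dj - 1 := by omega
        have hb : ∀ a b : ℕ, a ≤ b → (4:ℕ) ^ a ≤ 4 ^ b := fun a b hab =>
          Nat.pow_le_pow_right (by norm_num) hab
        have hp : 0 < (4:ℕ) ^ (dj - 1) := Nat.pow_pos (by norm_num)
        have h4 : (3:ℕ) * 4 ^ (dj - 1) < 4 ^ dj := by
          have he : (4:ℕ) ^ dj = 4 * 4 ^ (dj - 1) := by
            conv_lhs => rw [show dj = (dj - 1) + 1 by omega]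
            rw [pow_succ]; ring
          omega
        have g1 := hb _ _ hd1
        have g2 := hb _ _ hd2
        have g3 := hb _ _ hd3
        have g4 : 1 ≤ (4:ℕ) ^ di := Nat.one_le_pow _ _ (by norm_num)
        have g5 : 1 ≤ (4:ℕ) ^ di1 := Nat.one_le_pow _ _ (by norm_num)
        have g6 : (4:ℕ) ^ dj ≤ 4 ^ dj := le_rfl
        omega
      omega
    have hwf : WellFounded (InvImage (· < ·)
        (fun a : {D : Multiset ℕ | D.sum = n ∧ ∀ x ∈ D, 0 < x} =>
          ((a : Multiset ℕ).map (fun x => 4 ^ x)).sum)) :=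
      InvImage.wf _ Nat.lt_wfRel.wf
    exact Subrelation.wf (fun {a b} hab => hmeas _ _ hab) hwf
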